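/- Let g and h̄ be real numbers, let P̄ = [[0, 1, 0], [g·h̄, 0, g·h̄], [0, 0, 0]], and let ΔQ = (Δh, 0, Δη) be a vector whose second component is zero and which satisfies Δh + Δη = 0. Then P̄ · ΔQ = 0. Consequently, for lake-at-rest Riemann data (q_L = q_R = 0, h_L + η_L = h_R + η_R), both fluctuations D⁻ = P̄ · (Q_{*R} − Q_L) and D⁺ = P̄ · (Q_R − Q_{*L}) of the path-conservative scheme vanish, where Q_L = (h_L, 0, η_L), Q_R = (h_R, 0, η_R), Q_{*L} = (h_L, 0, η_L), Q_{*R} = (h_R, 0, η_R). -/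
import Mathlib

/-- The averaged pressure matrix annihilates lake-at-rest jumps: if `ΔQ = (Δh, 0, Δη)`
with `Δh + Δη = 0` then `P̄·ΔQ = 0`; consequently both fluctuations `D⁻ = P̄·(Q_{*R} − Q_L)`
and `D⁺ = P̄·(Q_R − Q_{*L})` vanish for lake-at-rest Riemann data. -/
theorem lake_at_rest_fluctuations_vanish (g hbar : ℝ) :
    (∀ Δh Δη : ℝ, Δh + Δη = 0 →
      (!![0, 1, 0; g * hbar, 0, g * hbar; 0, 0, 0] : Matrix (Fin 3) (Fin 3) ℝ).mulVec
        ![Δh, 0, Δη] = 0) ∧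
    (∀ hL hR ηL ηR : ℝ, hL + ηL = hR + ηR →
      (!![0, 1, 0; g * hbar, 0, g * hbar; 0, 0, 0] : Matrix (Fin 3) (Fin 3) ℝ).mulVec
        ((![hR, 0, ηR] : Fin 3 → ℝ) - ![hL, 0, ηL]) = 0 ∧
      (!![0, 1, 0; g * hbar, 0, g * hbar; 0, 0, 0] : Matrix (Fin 3) (Fin 3) ℝ).mulVec
        ((![hR, 0, ηR] : Fin 3 → ℝ) - ![hL, 0, ηL]) = 0) := by
  constructor
  · intro Δh Δη h
    funext i
    fin_cases i <;>
      simp [Matrix.mulVec, dotProduct, Fin.sum_univ_succ] <;>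
      linear_combination g * hbar * h
  · intro hL hR ηL ηR h
    constructor <;>
    · funext i
      fin_cases i <;>
        simp [Matrix.mulVec, dotProduct, Fin.sum_univ_succ] <;>
        linear_combination (-(g * hbar)) * h
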